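/- Let $f : \mathbb{R}^d \to \mathbb{R}$ be differentiable, and let $A, B \subseteq [d]$ be disjoint. Suppose $b^{(A)}$ maximizes $f$ over $\{x : \mathrm{supp}(x) \subseteq A\}$, $b^{(A\cup B)}$ maximizes $f$ over $\{x : \mathrm{supp}(x) \subseteq A\cup B\}$, and the first-order optimality condition $\nabla f(b^{(A)})_A = 0$ holds. Suppose $f$ satisfies the restricted strong concavity inequality $f(y) - f(x) - \langle\nabla f(x), y - x\rangle \le -\frac{\mu}{2}\|y - x\|_2^2$ for all $x, y$ with supports contained in $A \cup B$, where $\mu > 0$. Then $f(b^{(A\cup B)}) - f(b^{(A)}) \le \frac{1}{2\mu}\|\nabla f(b^{(A)})_B\|_2^2$. -/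

import Mathlib

theorem rsc_gradient_upper_bound (d : ℕ) (f : EuclideanSpace ℝ (Fin d) → ℝ)
    (g : EuclideanSpace ℝ (Fin d) → EuclideanSpace ℝ (Fin d))
    (hgrad : ∀ x, HasGradientAt f (g x) x)
    (A B : Finset (Fin d)) (hAB : Disjoint A B) (μ : ℝ) (hμ : 0 < μ)
    (bA bAB : EuclideanSpace ℝ (Fin d))
    (hbA_supp : ∀ i, i ∉ A → bA i = 0)
    (hbA_max : ∀ x : EuclideanSpace ℝ (Fin d), (∀ i, i ∉ A → x i = 0) → f x ≤ f bA)
    (hfoc : ∀ i ∈ A, g bA i = 0)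
    (hbAB_supp : ∀ i, i ∉ A ∪ B → bAB i = 0)
    (hbAB_max : ∀ x : EuclideanSpace ℝ (Fin d),
      (∀ i, i ∉ A ∪ B → x i = 0) → f x ≤ f bAB)
    (hconc : ∀ x y : EuclideanSpace ℝ (Fin d),
      (∀ i, i ∉ A ∪ B → x i = 0) → (∀ i, i ∉ A ∪ B → y i = 0) →
      f y - f x - (inner ℝ (g x) (y - x) : ℝ) ≤ -(μ / 2) * ‖y - x‖ ^ 2) :
    f bAB - f bA ≤ (1 / (2 * μ)) * ∑ i ∈ B, (g bA i) ^ 2 := by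
  have hbA_supp' : ∀ i, i ∉ A ∪ B → bA i = 0 := fun i hi =>
    hbA_supp i (fun h => hi (Finset.mem_union_left _ h))
  have key := hconc bA bAB hbA_supp' hbAB_supp
  set v := g bA with hv
  set w := bAB - bA with hw
  have hinner : (inner ℝ v w : ℝ) = ∑ i, v i * w i := by
    rw [PiLp.inner_apply]; exact Finset.sum_congr rfl fun i _ => by simp [mul_comm]
  have hnorm : ‖w‖ ^ 2 = ∑ i, (w i) ^ 2 := by
    rw [← real_inner_self_eq_norm_sq, PiLp.inner_apply]
    exact Finset.sum_congr rfl fun i _ => (sq (w i)).symm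
  have hle : f bAB - f bA ≤ ∑ i, (v i * w i - μ / 2 * (w i) ^ 2) := by
    have : f bAB - f bA ≤ (inner ℝ v w : ℝ) - μ / 2 * ‖w‖ ^ 2 := by linarith
    rw [hinner, hnorm] at this
    rw [Finset.sum_sub_distrib, ← Finset.mul_sum]
    exact this
  refine hle.trans ?_
  have hsum : ∑ i ∈ B, (g bA i) ^ 2 = ∑ i, (if i ∈ B then (v i) ^ 2 else 0) := by
    rw [Finset.sum_ite_mem, Finset.univ_inter]
  rw [hsum, Finset.mul_sum]
  apply Finset.sum_le_sum
  intro i _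
  by_cases hiB : i ∈ B
  · simp only [hiB, if_true]
    have h1 : 0 ≤ μ / 2 * (w i - v i / μ) ^ 2 :=
      mul_nonneg (by linarith) (sq_nonneg _)
    have hμ' : μ ≠ 0 := ne_of_gt hμ
    have expand : μ / 2 * (w i - v i / μ) ^ 2
        = μ / 2 * (w i) ^ 2 - v i * w i + 1 / (2 * μ) * (v i) ^ 2 := by
      field_simp
      ring
    nlinarith [h1]
  · simp only [hiB, if_false, mul_zero]
    by_cases hiA : i ∈ A
    · have : v i = 0 := hfoc i hiA
      rw [this]
      nlinarith [sq_nonneg (w i)]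
    · have hw0 : w i = 0 := by
        have h1 : bAB i = 0 := hbAB_supp i (by simp [hiA, hiB])
        have h2 : bA i = 0 := hbA_supp i hiA
        simp [hw, h1, h2]
      rw [hw0]
      simp
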